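/- Let r, d be positive integers and M > 0. Consider an arbitrary order-r Markov Random Field on {-1,1}^n, i.e. Pr(X=x) = (1/Z)·exp(f(x)) with f a multilinear polynomial of degree at most r and f(0) = 0, whose structure graph has degree at most d and all of whose coefficients are bounded in absolute value by M. Then there exists a constant C = C(d, M, r) and a Restricted Boltzmann Machine with n observed nodes and m ≤ C·n hidden nodes, with parameters (J, h^{(1)}, h^{(2)}), such that: (1) the marginal law of the observed variables of the RBM equals the distribution of the original MRF; (2) every hidden node has at most r neighbors (i.e. every column of J has at most r nonzero entries); and (3) the two-hop neighborhood of every observed node (the set of observed nodes sharing a hidden neighbor with it) equals its MRF neighborhood, so in particular the two-hop degree equals the degree of the structure graph of the MRF. -/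

import Mathlib

open Finset
open scoped BigOperators Classical symmDiff

noncomputable section

/-- The value of a spin: `true ↦ 1`, `false ↦ -1`. -/
def spin (b : Bool) : ℝ := if b then 1 else -1

/-- Boltzmann weight of a joint configuration of a Restricted Boltzmann Machine. -/
def rbmWeight (n m : ℕ) (J : Fin n → Fin m → ℝ) (h1 : Fin n → ℝ) (h2 : Fin m → ℝ)
    (x : Fin n → Bool) (y : Fin m → Bool) : ℝ :=
  Real.exp ((∑ i, ∑ j, J i j * spin (x i) * spin (y j))
    + (∑ i, h1 i * spin (x i)) + (∑ j, h2 j * spin (y j)))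

/-- Partition function of a Restricted Boltzmann Machine. -/
def rbmZ (n m : ℕ) (J : Fin n → Fin m → ℝ) (h1 : Fin n → ℝ) (h2 : Fin m → ℝ) : ℝ :=
  ∑ x : Fin n → Bool, ∑ y : Fin m → Bool, rbmWeight n m J h1 h2 x y

/-- The MRF potential with coefficient function `c`. -/
def mrfPotential (n : ℕ) (c : Finset (Fin n) → ℝ) (x : Fin n → Bool) : ℝ :=
  ∑ S : Finset (Fin n), c S * ∏ s ∈ S, spin (x s)

/-- The MRF neighborhood of vertex `i`: vertices `j ≠ i` appearing together
with `i` in a monomial of the potential with nonzero coefficient. -/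
def mrfNbhd (n : ℕ) (c : Finset (Fin n) → ℝ) (i : Fin n) : Finset (Fin n) :=
  univ.filter (fun j => j ≠ i ∧ ∃ S : Finset (Fin n), c S ≠ 0 ∧ i ∈ S ∧ j ∈ S)

/-- The two-hop neighborhood of observed node `i` in an RBM: observed nodes `j ≠ i`
sharing a hidden neighbor with `i`. -/
def twoHopNbhd (n m : ℕ) (J : Fin n → Fin m → ℝ) (i : Fin n) : Finset (Fin n) :=
  univ.filter (fun j => j ≠ i ∧ ∃ kh : Fin m, J i kh ≠ 0 ∧ J j kh ≠ 0)



/-- log(2 cosh z) -/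
def Lch (z : ℝ) : ℝ := Real.log (Real.exp z + Real.exp (-z))

lemma Lch_pos_arg (z : ℝ) : 0 < Real.exp z + Real.exp (-z) := by positivity

lemma Lch_zero : Lch 0 = Real.log 2 := by
  simp [Lch]; norm_num

lemma Lch_even (z : ℝ) : Lch (-z) = Lch z := by
  simp [Lch, add_comm]

lemma abs_le_Lch (z : ℝ) : |z| ≤ Lch z := by
  have h : Real.exp |z| ≤ Real.exp z + Real.exp (-z) := by
    rcases abs_cases z with ⟨h1, _⟩ | ⟨h1, _⟩ <;> rw [h1] <;>
      nlinarith [Real.exp_pos z, Real.exp_pos (-z)]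
  calc |z| = Real.log (Real.exp |z|) := (Real.log_exp _).symm
    _ ≤ _ := Real.log_le_log (Real.exp_pos _) h

lemma Lch_le (z : ℝ) : Lch z ≤ |z| + Real.log 2 := by
  have h : Real.exp z + Real.exp (-z) ≤ 2 * Real.exp |z| := by
    rcases abs_cases z with ⟨h1, h2⟩ | ⟨h1, h2⟩ <;> rw [h1]
    · nlinarith [Real.exp_le_exp.2 (by linarith : -z ≤ z)]
    · nlinarith [Real.exp_le_exp.2 (by linarith : z ≤ -z)]
  calc Lch z ≤ Real.log (2 * Real.exp |z|) :=
        Real.log_le_log (Lch_pos_arg z) h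
    _ = |z| + Real.log 2 := by
        rw [Real.log_mul (by norm_num) (Real.exp_ne_zero _), Real.log_exp]; ring

lemma Lch_cont : Continuous Lch := by
  apply Real.continuous_exp.add (Real.continuous_exp.comp continuous_neg) |>.log
  exact fun x => ne_of_gt (Lch_pos_arg x)

lemma Lch_sub_abs_nonneg (z : ℝ) : 0 ≤ Lch z - |z| := by linarith [abs_le_Lch z]

lemma Lch_sub_abs_le (z : ℝ) : Lch z - |z| ≤ Real.log 2 := by linarith [Lch_le z]



/-- partial alternating sum of binomials -/
lemma altsum (k : ℕ) (hk : k ≠ 0) (m : ℕ) :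
    ∑ j ∈ range (m + 1), (-1 : ℝ) ^ j * (k.choose j) =
      (-1) ^ m * ((k - 1).choose m) := by
  induction m with
  | zero => simp
  | succ m ih =>
      rw [Finset.sum_range_succ, ih]
      have hks : k = (k - 1) + 1 := (Nat.succ_pred_eq_of_pos (Nat.pos_of_ne_zero hk)).symm
      have hcs : k.choose (m + 1) = (k - 1).choose m + (k - 1).choose (m + 1) := by
        conv_lhs => rw [hks]
        rw [Nat.choose_succ_succ]
      rw [hcs]
      push_cast
      ring

lemma altsum_full (k : ℕ) (hk : k ≠ 0) :
    ∑ j ∈ range (k + 1), (-1 : ℝ) ^ j * (k.choose j) = 0 := by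
  rw [altsum k hk k, Nat.choose_eq_zero_of_lt (Nat.sub_lt (Nat.pos_of_ne_zero hk) one_pos)]
  simp

/-- the coefficient B -/
def Bcoef (k : ℕ) : ℝ :=
  ∑ j ∈ range (k + 1), (-1 : ℝ) ^ j * (k.choose j) * (if 2 * j ≤ k then 1 else -1)

lemma Bcoef_ne (k : ℕ) (hk : k ≠ 0) : Bcoef k ≠ 0 := by
  have hfilter : (range (k + 1)).filter (fun j => 2 * j ≤ k) = range (k / 2 + 1) := by
    ext j
    simp only [mem_filter, mem_range, Nat.lt_succ_iff]
    omega
  have hP : ∑ j ∈ range (k + 1), (-1 : ℝ) ^ j * (k.choose j) * (if 2 * j ≤ k then 1 else 0) =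
      (-1 : ℝ) ^ (k / 2) * ((k - 1).choose (k / 2)) := by
    calc ∑ j ∈ range (k + 1), (-1 : ℝ) ^ j * (k.choose j) * (if 2 * j ≤ k then 1 else 0)
        = ∑ j ∈ range (k + 1), (if 2 * j ≤ k then (-1 : ℝ) ^ j * (k.choose j) else 0) := by
          refine Finset.sum_congr rfl fun j _ => ?_
          split <;> simp
      _ = ∑ j ∈ (range (k + 1)).filter (fun j => 2 * j ≤ k), (-1 : ℝ) ^ j * (k.choose j) :=
          (Finset.sum_filter _ _).symm
      _ = (-1 : ℝ) ^ (k / 2) * ((k - 1).choose (k / 2)) := by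
          rw [hfilter, altsum k hk]
  have hB : Bcoef k = 2 * ((-1 : ℝ) ^ (k / 2) * ((k - 1).choose (k / 2))) := by
    have hsj : ∀ j, ((if 2 * j ≤ k then (1:ℝ) else -1)) =
        2 * (if 2 * j ≤ k then 1 else 0) - 1 := by
      intro j; split <;> norm_num
    unfold Bcoef
    calc ∑ j ∈ range (k + 1), (-1 : ℝ) ^ j * (k.choose j) * (if 2 * j ≤ k then 1 else -1)
        = ∑ j ∈ range (k + 1), (2 * ((-1 : ℝ) ^ j * (k.choose j) * (if 2 * j ≤ k then 1 else 0))
            - (-1 : ℝ) ^ j * (k.choose j)) := by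
          refine Finset.sum_congr rfl fun j _ => ?_
          rw [hsj j]; ring
      _ = 2 * (∑ j ∈ range (k + 1), (-1 : ℝ) ^ j * (k.choose j) * (if 2 * j ≤ k then 1 else 0))
            - ∑ j ∈ range (k + 1), (-1 : ℝ) ^ j * (k.choose j) := by
          rw [Finset.sum_sub_distrib, Finset.mul_sum]
      _ = 2 * ((-1 : ℝ) ^ (k / 2) * ((k - 1).choose (k / 2))) := by
          rw [hP, altsum_full k hk]; ring
  rw [hB]
  have hle : k / 2 ≤ k - 1 := by omega
  have hch : ((k - 1).choose (k / 2) : ℝ) ≠ 0 := by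
    exact Nat.cast_ne_zero.2 (Nat.choose_pos hle).ne'
  have hpow : ((-1 : ℝ) ^ (k / 2)) ≠ 0 := by
    exact pow_ne_zero _ (by norm_num)
  positivity


-- assume A.lean and B.lean contents present; for testing, inline minimal axioms
def Qcoef (k : ℕ) (β : ℝ) : ℝ :=
  ∑ j ∈ range (k + 1), (-1 : ℝ) ^ j * (k.choose j) * |(k : ℝ) - 2 * j + β|

lemma Qlin (k : ℕ) : Qcoef k (1/2) - Qcoef k (1/3) = (1/6) * Bcoef k := by
  unfold Qcoef Bcoef
  rw [← Finset.sum_sub_distrib, Finset.mul_sum]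
  refine Finset.sum_congr rfl fun j hj => ?_
  rcases le_or_gt (2 * j) k with h | h
  · have h' : (2 * j : ℝ) ≤ k := by exact_mod_cast h
    rw [abs_of_nonneg (by push_cast; linarith), abs_of_nonneg (by push_cast; linarith),
      if_pos h]
    ring
  · have h' : (k : ℝ) + 1 ≤ 2 * j := by exact_mod_cast h
    rw [abs_of_neg (by push_cast; linarith), abs_of_neg (by push_cast; linarith),
      if_neg (by omega)]
    ring

lemma Qchoice (k : ℕ) (hk : k ≠ 0) : ∃ β : ℝ, 0 < β ∧ β < 1 ∧ Qcoef k β ≠ 0 := by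
  by_cases h : Qcoef k (1/2) = 0
  · refine ⟨1/3, by norm_num, by norm_num, fun h3 => Bcoef_ne k hk ?_⟩
    have := Qlin k
    rw [h, h3] at this
    linarith
  · exact ⟨1/2, by norm_num, by norm_num, h⟩

def gsum (k : ℕ) (t b : ℝ) : ℝ :=
  ∑ j ∈ range (k + 1), (-1 : ℝ) ^ j * (k.choose j) * Lch (t * ((k : ℝ) - 2 * j) + b)

lemma gsum_surj (k : ℕ) (hk : k ≠ 0) (γ : ℝ) (hγ : γ ≠ 0) :
    ∃ t b : ℝ, 0 < t ∧ (gsum k t b = 2 * γ ∨ gsum k t b = -(2 * γ)) := by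
  obtain ⟨β, hβ0, hβ1, hQ⟩ := Qchoice k hk
  set Q := Qcoef k β with hQdef
  set g : ℝ → ℝ := fun t => gsum k t (β * t) with hg
  have hlog2 : (0:ℝ) ≤ Real.log 2 := Real.log_nonneg (by norm_num)
  set W : ℝ := (∑ j ∈ range (k + 1), (k.choose j : ℝ)) * Real.log 2 with hW
  have hW0 : 0 ≤ W := by
    apply mul_nonneg _ hlog2
    positivity
  have hcont : Continuous g := by
    simp only [hg]
    unfold gsum
    apply continuous_finset_sum
    intro j _
    exact continuous_const.mul (Lch_cont.comp (by continuity))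
  have hg0 : g 0 = 0 := by
    simp only [hg]
    unfold gsum
    simp only [mul_zero, zero_mul, zero_add, Lch_zero]
    rw [← Finset.sum_mul, altsum_full k hk, zero_mul]
  have hest : ∀ t : ℝ, 0 ≤ t → |g t - t * Q| ≤ W := by
    intro t ht
    have hgt : g t - t * Q = ∑ j ∈ range (k + 1),
        (-1 : ℝ) ^ j * (k.choose j) *
          (Lch (t * ((k : ℝ) - 2 * j) + β * t) - |t * ((k : ℝ) - 2 * j) + β * t|) := by
      simp only [hg, hQdef]
      unfold gsum Qcoef
      rw [Finset.mul_sum, ← Finset.sum_sub_distrib]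
      refine Finset.sum_congr rfl fun j hj => ?_
      have habs : |t * ((k : ℝ) - 2 * j) + β * t| = t * |(k : ℝ) - 2 * j + β| := by
        have : t * ((k : ℝ) - 2 * j) + β * t = t * ((k : ℝ) - 2 * j + β) := by ring
        rw [this, abs_mul, abs_of_nonneg ht]
      rw [habs]
      ring
    rw [hgt, hW]
    calc |∑ j ∈ range (k + 1), (-1 : ℝ) ^ j * (k.choose j) *
          (Lch (t * ((k : ℝ) - 2 * j) + β * t) - |t * ((k : ℝ) - 2 * j) + β * t|)|
        ≤ ∑ j ∈ range (k + 1), |(-1 : ℝ) ^ j * (k.choose j) *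
          (Lch (t * ((k : ℝ) - 2 * j) + β * t) - |t * ((k : ℝ) - 2 * j) + β * t|)| :=
          Finset.abs_sum_le_sum_abs _ _
      _ ≤ ∑ j ∈ range (k + 1), (k.choose j : ℝ) * Real.log 2 := by
          refine Finset.sum_le_sum fun j _ => ?_
          rw [abs_mul, abs_mul, abs_pow, abs_neg, abs_one, one_pow, one_mul,
            Nat.abs_cast]
          apply mul_le_mul_of_nonneg_left _ (Nat.cast_nonneg _)
          rw [abs_of_nonneg (Lch_sub_abs_nonneg _)]
          exact Lch_sub_abs_le _
      _ = (∑ j ∈ range (k + 1), (k.choose j : ℝ)) * Real.log 2 := by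
          rw [Finset.sum_mul]
  have hQ0 : 0 < |Q| := abs_pos.2 hQ
  have hγ0 : 0 < |γ| := abs_pos.2 hγ
  set T : ℝ := (2 * |γ| + W + 1) / |Q| with hT
  have hT0 : 0 < T := by
    apply div_pos (by linarith) hQ0
  have hTQ : T * |Q| = 2 * |γ| + W + 1 := div_mul_cancel₀ _ hQ0.ne'
  have hgT : 2 * |γ| + 1 ≤ |g T| := by
    have h1 : |g T - T * Q| ≤ W := hest T hT0.le
    have h2 : |T * Q| = T * |Q| := by rw [abs_mul, abs_of_nonneg hT0.le]
    have h3 : |T * Q| - |g T - T * Q| ≤ |g T| := by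
      have := abs_sub_abs_le_abs_sub (T * Q) (g T)
      have h4 : |T * Q - g T| = |g T - T * Q| := abs_sub_comm _ _
      linarith
    linarith [hTQ, h2 ▸ h3]
  rcases le_or_gt 0 (g T) with hpos | hneg
  · have hgT' : 2 * |γ| + 1 ≤ g T := by rwa [abs_of_nonneg hpos] at hgT
    have hmem : 2 * |γ| ∈ Set.Icc (g 0) (g T) := by
      rw [hg0]; exact ⟨by positivity, by linarith⟩
    obtain ⟨t, ht, hgt⟩ := intermediate_value_Icc hT0.le hcont.continuousOn hmem
    have htpos : 0 < t := by
      rcases lt_or_eq_of_le ht.1 with h | h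
      · exact h
      · exfalso; rw [← h, hg0] at hgt; linarith
    refine ⟨t, β * t, htpos, ?_⟩
    have h5 : gsum k t (β * t) = 2 * |γ| := hgt
    rcases abs_cases γ with ⟨he, _⟩ | ⟨he, _⟩
    · left; rw [h5, he]
    · right; rw [h5, he]; ring
  · have hgT' : g T ≤ -(2 * |γ| + 1) := by
      rw [abs_of_neg hneg] at hgT; linarith
    have hmem : -(2 * |γ|) ∈ Set.Icc (g T) (g 0) := by
      rw [hg0]; exact ⟨by linarith, neg_nonpos.2 (by positivity)⟩
    obtain ⟨t, ht, hgt⟩ := intermediate_value_Icc' hT0.le hcont.continuousOn hmem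
    have htpos : 0 < t := by
      rcases lt_or_eq_of_le ht.1 with h | h
      · exact h
      · exfalso; rw [← h, hg0] at hgt; linarith
    refine ⟨t, β * t, htpos, ?_⟩
    have h5 : gsum k t (β * t) = -(2 * |γ|) := hgt
    rcases abs_cases γ with ⟨he, _⟩ | ⟨he, _⟩
    · right; rw [h5, he]
    · left; rw [h5, he]; ring


lemma symmDiff_subset' {α : Type*} [DecidableEq α] {A X S : Finset α}
    (hA : A ⊆ S) (hX : X ⊆ S) : A ∆ X ⊆ S := by
  intro a ha
  rw [Finset.mem_symmDiff] at ha
  rcases ha with ⟨h1, _⟩ | ⟨h1, _⟩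
  · exact hA h1
  · exact hX h1

lemma card_symmDiff_parity {α : Type*} [DecidableEq α] (A X : Finset α) :
    Even (A ∆ X).card ↔ (Even A.card ↔ Even X.card) := by
  have hd : Disjoint (A ∆ X) (A ∩ X) := by
    rw [Finset.disjoint_left]
    intro a ha hb
    rw [Finset.mem_symmDiff] at ha
    rw [Finset.mem_inter] at hb
    tauto
  have hu : (A ∆ X) ∪ (A ∩ X) = A ∪ X := by
    ext a
    rw [Finset.mem_union, Finset.mem_symmDiff, Finset.mem_inter, Finset.mem_union]
    tauto
  have h1 : (A ∆ X).card + (A ∩ X).card = (A ∪ X).card := by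
    rw [← Finset.card_union_of_disjoint hd, hu]
  have h2 : (A ∪ X).card + (A ∩ X).card = A.card + X.card :=
    Finset.card_union_add_card_inter A X
  have h3 : (A ∆ X).card + 2 * (A ∩ X).card = A.card + X.card := by omega
  have h4 : Even ((A ∆ X).card + 2 * (A ∩ X).card) ↔ Even (A.card + X.card) := by rw [h3]
  simp [Nat.even_add, parity_simps] at h4 ⊢
  tauto

lemma sum_reindex_symmDiff {α : Type*} [DecidableEq α] (S X : Finset α) (hX : X ⊆ S)
    (f : Finset α → ℝ) (ε η : Bool)
    (hη : ∀ A, A ⊆ S → ((decide (Even A.card) = ε) ↔ (decide (Even (A ∆ X).card) = η))) :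
    ∑ A ∈ S.powerset.filter (fun A => decide (Even A.card) = ε), f (A ∆ X)
      = ∑ B ∈ S.powerset.filter (fun B => decide (Even B.card) = η), f B := by
  refine Finset.sum_nbij' (fun A => A ∆ X) (fun B => B ∆ X) ?_ ?_ ?_ ?_ ?_
  · intro A hA
    rw [Finset.mem_filter, Finset.mem_powerset] at hA ⊢
    exact ⟨symmDiff_subset' hA.1 hX, (hη A hA.1).1 hA.2⟩
  · intro B hB
    rw [Finset.mem_filter, Finset.mem_powerset] at hB ⊢
    have hBS : B ∆ X ⊆ S := symmDiff_subset' hB.1 hX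
    refine ⟨hBS, ?_⟩
    have := hη (B ∆ X) hBS
    rw [symmDiff_symmDiff_cancel_right] at this
    exact this.2 hB.2
  · intro A _; exact symmDiff_symmDiff_cancel_right X A
  · intro B _; exact symmDiff_symmDiff_cancel_right X B
  · intro A _; rfl

lemma gadget {n : ℕ} (S : Finset (Fin n)) (hS : S.Nonempty) (γ : ℝ) (hγ : γ ≠ 0) :
    ∃ (t b : ℝ) (ε : Bool) (K : ℝ), 0 < t ∧ ∀ x : Fin n → Bool,
      ∑ A ∈ S.powerset.filter (fun A => decide (Even A.card) = ε),
        Lch ((∑ i ∈ S, (if i ∈ A then -t else t) * spin (x i)) + b)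
      = K + γ * ∏ i ∈ S, spin (x i) := by
  have hk0 : S.card ≠ 0 := by
    rw [← Finset.card_pos] at hS; omega
  obtain ⟨t, b, ht, hD⟩ := gsum_surj S.card hk0 γ hγ
  set k := S.card with hkdef
  set Φ : Bool → ℝ := fun η => ∑ B ∈ S.powerset.filter (fun B => decide (Even B.card) = η),
      Lch (t * ((k : ℝ) - 2 * B.card) + b) with hΦ
  have hΦdiff : Φ true - Φ false = gsum k t b := by
    have hsplit : ∑ B ∈ S.powerset, (-1 : ℝ) ^ B.card * Lch (t * ((k : ℝ) - 2 * B.card) + b)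
        = Φ true - Φ false := by
      rw [← Finset.sum_filter_add_sum_filter_not S.powerset
        (fun B => decide (Even B.card) = true)]
      have e1 : ∑ B ∈ S.powerset.filter (fun B => decide (Even B.card) = true),
          (-1 : ℝ) ^ B.card * Lch (t * ((k : ℝ) - 2 * B.card) + b) = Φ true := by
        refine Finset.sum_congr rfl fun B hB => ?_
        have : Even B.card := by simpa using (Finset.mem_filter.1 hB).2
        rw [this.neg_one_pow, one_mul]
      have e2 : ∑ B ∈ S.powerset.filter (fun B => ¬ decide (Even B.card) = true),
          (-1 : ℝ) ^ B.card * Lch (t * ((k : ℝ) - 2 * B.card) + b) = -Φ false := by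
        rw [hΦ]
        have hfeq : S.powerset.filter (fun B => ¬ decide (Even B.card) = true)
            = S.powerset.filter (fun B => decide (Even B.card) = false) := by
          apply Finset.filter_congr
          intro B _
          simp
        rw [hfeq, ← Finset.sum_neg_distrib]
        refine Finset.sum_congr rfl fun B hB => ?_
        have : ¬ Even B.card := by simpa using (Finset.mem_filter.1 hB).2
        rw [(Nat.not_even_iff_odd.1 this).neg_one_pow]
        ring
      rw [e1, e2]
      ring
    have hgroup : ∑ B ∈ S.powerset, (-1 : ℝ) ^ B.card * Lch (t * ((k : ℝ) - 2 * B.card) + b)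
        = gsum k t b := by
      rw [Finset.sum_powerset_apply_card
        (fun j => (-1 : ℝ) ^ j * Lch (t * ((k : ℝ) - 2 * j) + b)), gsum]
      refine Finset.sum_congr rfl fun j _ => ?_
      rw [nsmul_eq_mul]
      ring
    rw [← hsplit, hgroup]
  -- key per-x computation, for a given ε and matching η
  have hkey : ∀ (x : Fin n → Bool) (ε η : Bool),
      (∀ A, A ⊆ S → ((decide (Even A.card) = ε) ↔
        (decide (Even ((A ∆ (S.filter (fun i => x i = false))).card)) = η))) →
      ∑ A ∈ S.powerset.filter (fun A => decide (Even A.card) = ε),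
        Lch ((∑ i ∈ S, (if i ∈ A then -t else t) * spin (x i)) + b) = Φ η := by
    intro x ε η hη
    set X := S.filter (fun i => x i = false) with hXdef
    have hXS : X ⊆ S := Finset.filter_subset _ _
    have harg : ∀ A, A ⊆ S → (∑ i ∈ S, (if i ∈ A then -t else t) * spin (x i)) + b
        = t * ((k : ℝ) - 2 * ((A ∆ X).card)) + b := by
      intro A hA
      have hU : A ∆ X ⊆ S := symmDiff_subset' hA hXS
      have h1 : ∀ i ∈ S, (if i ∈ A then -t else t) * spin (x i)
          = t * (if i ∈ A ∆ X then (-1 : ℝ) else 1) := by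
        intro i hi
        have hiX : i ∈ X ↔ x i = false := by
          rw [hXdef, Finset.mem_filter]
          exact ⟨fun h => h.2, fun h => ⟨hi, h⟩⟩
        by_cases hAi : i ∈ A <;> cases hxi : x i <;>
          simp [Finset.mem_symmDiff, spin, hAi, hxi, hiX] <;> ring
      rw [Finset.sum_congr rfl h1, ← Finset.mul_sum]
      congr 2
      have h4 : ∀ i, (if i ∈ A ∆ X then (-1 : ℝ) else 1)
          = 1 - 2 * (if i ∈ A ∆ X then (1 : ℝ) else 0) := by
        intro i; split <;> norm_num
      rw [Finset.sum_congr rfl (fun i _ => h4 i), Finset.sum_sub_distrib,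
        Finset.sum_const, ← Finset.mul_sum, Finset.sum_ite_mem,
        Finset.inter_eq_right.2 hU, Finset.sum_const]
      simp [hkdef]
    calc ∑ A ∈ S.powerset.filter (fun A => decide (Even A.card) = ε),
          Lch ((∑ i ∈ S, (if i ∈ A then -t else t) * spin (x i)) + b)
        = ∑ A ∈ S.powerset.filter (fun A => decide (Even A.card) = ε),
          Lch (t * ((k : ℝ) - 2 * ((A ∆ X).card)) + b) := by
          refine Finset.sum_congr rfl fun A hA => ?_
          rw [harg A (Finset.mem_powerset.1 (Finset.mem_filter.1 hA).1)]
      _ = Φ η := by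
          rw [hΦ]
          exact sum_reindex_symmDiff S X hXS
            (fun B => Lch (t * ((k : ℝ) - 2 * B.card) + b)) ε η hη
  have hprod : ∀ x : Fin n → Bool, ∏ i ∈ S, spin (x i)
      = if Even (S.filter (fun i => x i = false)).card then (1:ℝ) else -1 := by
    intro x
    set X := S.filter (fun i => x i = false) with hXdef
    have h1 : ∀ i ∈ S, spin (x i) = if x i = false then (-1 : ℝ) else 1 := by
      intro i _; cases hxi : x i <;> simp [spin, hxi]
    have h2 : ∏ i ∈ X, (if x i = false then (-1 : ℝ) else 1) = (-1 : ℝ) ^ X.card := by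
      rw [Finset.prod_congr rfl (fun i hi => if_pos (Finset.mem_filter.1 hi).2),
        Finset.prod_const]
    have h3 : ∏ i ∈ S.filter (fun i => ¬ x i = false),
        (if x i = false then (-1 : ℝ) else 1) = 1 := by
      rw [Finset.prod_congr rfl (fun i hi => if_neg (Finset.mem_filter.1 hi).2)]
      exact Finset.prod_const_one
    calc ∏ i ∈ S, spin (x i) = ∏ i ∈ S, (if x i = false then (-1 : ℝ) else 1) :=
          Finset.prod_congr rfl h1
      _ = (∏ i ∈ X, (if x i = false then (-1 : ℝ) else 1)) *
            ∏ i ∈ S.filter (fun i => ¬ x i = false), (if x i = false then (-1 : ℝ) else 1) :=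
          (Finset.prod_filter_mul_prod_filter_not S _ _).symm
      _ = (-1 : ℝ) ^ X.card := by rw [h2, h3, mul_one]
      _ = if Even X.card then (1:ℝ) else -1 := by
          by_cases he : Even X.card
          · rw [if_pos he, he.neg_one_pow]
          · rw [if_neg he, (Nat.not_even_iff_odd.1 he).neg_one_pow]
  rcases hD with h2γ | h2γ
  · -- gsum = 2γ, use ε = true
    refine ⟨t, b, true, Φ false + γ, ht, fun x => ?_⟩
    set X := S.filter (fun i => x i = false) with hXdef
    have hη : ∀ A, A ⊆ S → ((decide (Even A.card) = true) ↔
        (decide (Even ((A ∆ X).card)) = decide (Even X.card))) := by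
      intro A hA
      rw [decide_eq_true_iff, decide_eq_decide, card_symmDiff_parity]
      tauto
    rw [hkey x true (decide (Even X.card)) hη, hprod x]
    have hΦt := hΦdiff
    rw [h2γ] at hΦt
    by_cases he : Even X.card
    · rw [decide_eq_true he, if_pos he]
      linarith
    · rw [decide_eq_false he, if_neg he]
      ring
  · -- gsum = -(2γ), use ε = false
    refine ⟨t, b, false, Φ false - γ, ht, fun x => ?_⟩
    set X := S.filter (fun i => x i = false) with hXdef
    have hη : ∀ A, A ⊆ S → ((decide (Even A.card) = false) ↔
        (decide (Even ((A ∆ X).card)) = !decide (Even X.card))) := by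
      intro A hA
      have hpar := card_symmDiff_parity A X
      by_cases hr : Even X.card
      · rw [decide_eq_true hr]
        simp only [Bool.not_true, decide_eq_false_iff_not]
        tauto
      · rw [decide_eq_false hr]
        simp only [Bool.not_false, decide_eq_false_iff_not, decide_eq_true_eq]
        tauto
    rw [hkey x false (!decide (Even X.card)) hη, hprod x]
    have hΦt := hΦdiff
    rw [h2γ] at hΦt
    by_cases he : Even X.card
    · rw [decide_eq_true he]
      simp only [Bool.not_true]
      rw [if_pos he]
      ring
    · rw [decide_eq_false he]
      simp only [Bool.not_false]
      rw [if_neg he]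
      linarith


/-- support of the MRF: monomials of degree ≥ 2 -/
def suppF (n : ℕ) (c : Finset (Fin n) → ℝ) : Finset (Finset (Fin n)) :=
  univ.filter (fun S => c S ≠ 0 ∧ 2 ≤ S.card)

/-- family of subsets for the gadget of `S` -/
def famF (n : ℕ) (εS : Finset (Fin n) → Bool) (S : Finset (Fin n)) :
    Finset (Finset (Fin n)) :=
  S.powerset.filter (fun A => decide (Even A.card) = εS S)

/-- hidden unit index type -/
abbrev IdxT (n : ℕ) (c : Finset (Fin n) → ℝ) (εS : Finset (Fin n) → Bool) : Type :=
  Σ S : {S : Finset (Fin n) // S ∈ suppF n c}, {A : Finset (Fin n) // A ∈ famF n εS S.1}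

/-- the weight of observed node `i` at hidden unit `u` -/
def WF (n : ℕ) (c : Finset (Fin n) → ℝ) (εS : Finset (Fin n) → Bool)
    (tS : Finset (Fin n) → ℝ) (i : Fin n) (u : IdxT n c εS) : ℝ :=
  if i ∈ u.2.1 then -(tS u.1.1) else if i ∈ u.1.1 then tS u.1.1 else 0


/-- Every bounded-degree order-`r` MRF with bounded coefficients is the marginal
distribution of the observed variables of an RBM with `O(n)` hidden nodes, each of
degree at most `r`, whose two-hop neighborhoods coincide with the MRF neighborhoods. -/
theorem mrf_as_rbm (r d : ℕ) (hr : 0 < r) (hd : 0 < d) (M : ℝ) (hM : 0 < M) :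
    ∃ C : ℕ, ∀ (n : ℕ) (c : Finset (Fin n) → ℝ),
      c ∅ = 0 →
      (∀ S : Finset (Fin n), c S ≠ 0 → S.card ≤ r) →
      (∀ S : Finset (Fin n), |c S| ≤ M) →
      (∀ i : Fin n, (mrfNbhd n c i).card ≤ d) →
      ∃ (m : ℕ) (J : Fin n → Fin m → ℝ) (h1 : Fin n → ℝ) (h2 : Fin m → ℝ),
        m ≤ C * n ∧
        (∀ x : Fin n → Bool,
          (∑ y : Fin m → Bool, rbmWeight n m J h1 h2 x y) / rbmZ n m J h1 h2 =
            Real.exp (mrfPotential n c x) /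
              ∑ x' : Fin n → Bool, Real.exp (mrfPotential n c x')) ∧
        (∀ j : Fin m, (univ.filter (fun i : Fin n => J i j ≠ 0)).card ≤ r) ∧
        (∀ i : Fin n, twoHopNbhd n m J i = mrfNbhd n c i) := by
  refine ⟨2 ^ (r + d + 1), fun n c hc0 hcr hcM hnb => ?_⟩
  -- choose gadget parameters for every S
  have hgad : ∀ S : Finset (Fin n), ∃ (t b : ℝ) (ε : Bool) (K : ℝ),
      (c S ≠ 0 ∧ 2 ≤ S.card) → (0 < t ∧ ∀ x : Fin n → Bool,
        ∑ A ∈ S.powerset.filter (fun A => decide (Even A.card) = ε),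
          Lch ((∑ i ∈ S, (if i ∈ A then -t else t) * spin (x i)) + b)
        = K + c S * ∏ i ∈ S, spin (x i)) := by
    intro S
    by_cases hScond : c S ≠ 0 ∧ 2 ≤ S.card
    · obtain ⟨t, b, ε, K, ht, hid⟩ := gadget S (Finset.card_pos.1 (by omega)) (c S) hScond.1
      exact ⟨t, b, ε, K, fun _ => ⟨ht, hid⟩⟩
    · exact ⟨1, 0, true, 0, fun h => absurd h hScond⟩
  choose tS bS εS KS hgadS using hgad
  set supp := suppF n c with hsuppdef
  have hsuppmem : ∀ S, S ∈ supp ↔ (c S ≠ 0 ∧ 2 ≤ S.card) := by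
    intro S; simp [hsuppdef, suppF, mem_filter]
  set I := IdxT n c εS with hIdef
  set m := Fintype.card I with hmdef
  set e : Fin m ≃ I := (Fintype.equivFin I).symm with hedef
  set W : Fin n → I → ℝ := WF n c εS tS with hWdef
  set J : Fin n → Fin m → ℝ := fun i j => W i (e j) with hJdef
  set h2 : Fin m → ℝ := fun j => bS (e j).1.1 with hh2def
  set h1 : Fin n → ℝ := fun i => c {i} with hh1def
  -- basic facts about units
  have hUsupp : ∀ u : I, c u.1.1 ≠ 0 ∧ 2 ≤ u.1.1.card := by
    intro u; exact (hsuppmem u.1.1).1 u.1.2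
  have htpos : ∀ u : I, 0 < tS u.1.1 := fun u => (hgadS u.1.1 (hUsupp u)).1
  have hAsub : ∀ u : I, u.2.1 ⊆ u.1.1 := by
    intro u
    have h := u.2.2
    simp only [famF, mem_filter, mem_powerset] at h
    exact h.1
  have hWne : ∀ (u : I) (i : Fin n), W i u ≠ 0 ↔ i ∈ u.1.1 := by
    intro u i
    rw [hWdef]
    unfold WF
    constructor
    · intro h
      by_cases hA : i ∈ u.2.1
      · exact hAsub u hA
      · rw [if_neg hA] at h
        by_cases hSu : i ∈ u.1.1
        · exact hSu
        · rw [if_neg hSu] at h; exact absurd rfl h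
    · intro h
      by_cases hA : i ∈ u.2.1
      · rw [if_pos hA]; exact neg_ne_zero.2 (htpos u).ne'
      · rw [if_neg hA, if_pos h]; exact (htpos u).ne'
  clear_value J h2
  clear_value e
  clear hedef
  clear_value m
  refine ⟨m, J, h1, h2, ?_, ?_, ?_, ?_⟩
  · -- cardinality bound
    have hm1 : m = ∑ S ∈ supp, (famF n εS S).card := by
      rw [hmdef]
      rw [show (Fintype.card I) = ∑ S' : {S // S ∈ suppF n c},
          Fintype.card {A // A ∈ famF n εS S'.1} from Fintype.card_sigma]
      rw [show (∑ S' : {S // S ∈ suppF n c}, Fintype.card {A // A ∈ famF n εS S'.1})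
          = ∑ S' : {S // S ∈ suppF n c}, (famF n εS S'.1).card from
        Finset.sum_congr rfl fun S' _ => Fintype.card_coe _]
      exact Finset.sum_coe_sort (suppF n c) (fun S => (famF n εS S).card)
    have hfamcard : ∀ S ∈ supp, (famF n εS S).card ≤ 2 ^ r := by
      intro S hS
      calc (famF n εS S).card ≤ S.powerset.card :=
            Finset.card_le_card (Finset.filter_subset _ _)
        _ = 2 ^ S.card := Finset.card_powerset S
        _ ≤ 2 ^ r := Nat.pow_le_pow_right (by norm_num) (hcr S ((hsuppmem S).1 hS).1)
    have hsc : supp.card ≤ n * 2 ^ (d + 1) := by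
      have h1 : supp.card ≤ ∑ S ∈ supp, S.card := by
        rw [Finset.card_eq_sum_ones]
        exact Finset.sum_le_sum fun S hS => by
          have := ((hsuppmem S).1 hS).2; omega
      have h2 : ∑ S ∈ supp, S.card = ∑ i : Fin n, (supp.filter (fun S => i ∈ S)).card := by
        calc ∑ S ∈ supp, S.card
            = ∑ S ∈ supp, ∑ i : Fin n, (if i ∈ S then 1 else 0) := by
              refine Finset.sum_congr rfl fun S _ => ?_
              rw [Finset.sum_ite_mem, Finset.univ_inter, Finset.sum_const, smul_eq_mul, mul_one]
          _ = ∑ i : Fin n, ∑ S ∈ supp, (if i ∈ S then 1 else 0) := Finset.sum_comm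
          _ = ∑ i : Fin n, (supp.filter (fun S => i ∈ S)).card := by
              refine Finset.sum_congr rfl fun i _ => ?_
              rw [← Finset.sum_filter, ← Finset.card_eq_sum_ones]
      have h3 : ∀ i : Fin n, (supp.filter (fun S => i ∈ S)).card ≤ 2 ^ (d + 1) := by
        intro i
        have hsub : supp.filter (fun S => i ∈ S) ⊆ (insert i (mrfNbhd n c i)).powerset := by
          intro S hS
          rw [mem_filter] at hS
          rw [mem_powerset]
          intro j hj
          by_cases hji : j = i
          · subst hji; exact Finset.mem_insert_self _ _
          · refine Finset.mem_insert_of_mem ?_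
            rw [mrfNbhd, mem_filter]
            exact ⟨mem_univ _, hji, S, ((hsuppmem S).1 hS.1).1, hS.2, hj⟩
        calc (supp.filter (fun S => i ∈ S)).card
            ≤ (insert i (mrfNbhd n c i)).powerset.card := Finset.card_le_card hsub
          _ = 2 ^ (insert i (mrfNbhd n c i)).card := Finset.card_powerset _
          _ ≤ 2 ^ (d + 1) := Nat.pow_le_pow_right (by norm_num)
              (le_trans (Finset.card_insert_le _ _) (by have := hnb i; omega))
      calc supp.card ≤ ∑ S ∈ supp, S.card := h1
        _ = ∑ i : Fin n, (supp.filter (fun S => i ∈ S)).card := h2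
        _ ≤ ∑ _i : Fin n, 2 ^ (d + 1) := Finset.sum_le_sum fun i _ => h3 i
        _ = n * 2 ^ (d + 1) := by
            rw [Finset.sum_const, Finset.card_univ, Fintype.card_fin, smul_eq_mul]
    calc m = ∑ S ∈ supp, (famF n εS S).card := hm1
      _ ≤ ∑ _S ∈ supp, 2 ^ r := Finset.sum_le_sum hfamcard
      _ = supp.card * 2 ^ r := by rw [Finset.sum_const, smul_eq_mul]
      _ ≤ (n * 2 ^ (d + 1)) * 2 ^ r := Nat.mul_le_mul_right _ hsc
      _ = 2 ^ (r + d + 1) * n := by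
          rw [show r + d + 1 = r + (d + 1) by omega, pow_add]; ring
  · -- marginal distribution
    have hE : ∀ z : ℝ, (∑ bb : Bool, Real.exp (z * spin bb)) = Real.exp (Lch z) := by
      intro z
      rw [Lch, Real.exp_log (Lch_pos_arg z), Fintype.sum_bool]
      simp [spin]
    have hmargF : ∀ x : Fin n → Bool, (∑ y : Fin m → Bool, rbmWeight n m J h1 h2 x y)
        = Real.exp ((∑ i, h1 i * spin (x i))
            + ∑ j : Fin m, Lch ((∑ i, J i j * spin (x i)) + h2 j)) := by
      intro x
      have hsw : ∀ y : Fin m → Bool, rbmWeight n m J h1 h2 x y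
          = Real.exp (∑ i, h1 i * spin (x i)) *
            ∏ j : Fin m, Real.exp (((∑ i, J i j * spin (x i)) + h2 j) * spin (y j)) := by
        intro y
        have e1 : ∑ j : Fin m, ((∑ i, J i j * spin (x i)) + h2 j) * spin (y j)
            = (∑ j : Fin m, ∑ i, J i j * spin (x i) * spin (y j))
              + ∑ j, h2 j * spin (y j) := by
          rw [← Finset.sum_add_distrib]
          refine Finset.sum_congr rfl fun j _ => ?_
          rw [add_mul, Finset.sum_mul]
        have e2 : ∑ j : Fin m, ∑ i, J i j * spin (x i) * spin (y j)
            = ∑ i, ∑ j, J i j * spin (x i) * spin (y j) := Finset.sum_comm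
        rw [rbmWeight]
        rw [show (∑ i, ∑ j, J i j * spin (x i) * spin (y j)) + (∑ i, h1 i * spin (x i))
            + (∑ j, h2 j * spin (y j))
          = (∑ i, h1 i * spin (x i))
            + ∑ j : Fin m, ((∑ i, J i j * spin (x i)) + h2 j) * spin (y j)
          from by rw [e1, e2]; ring]
        rw [Real.exp_add]
        congr 1
        exact Real.exp_sum _ _
      rw [Finset.sum_congr rfl (fun y _ => hsw y), ← Finset.mul_sum]
      have hswap : (∑ y : Fin m → Bool,
            ∏ j : Fin m, Real.exp (((∑ i, J i j * spin (x i)) + h2 j) * spin (y j)))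
          = ∏ j : Fin m, ∑ bb : Bool,
              Real.exp (((∑ i, J i j * spin (x i)) + h2 j) * spin bb) := by
        rw [show (univ : Finset (Fin m → Bool))
            = Fintype.piFinset (fun _ : Fin m => (univ : Finset Bool)) from
          (Fintype.piFinset_univ).symm]
        exact Finset.sum_prod_piFinset (ι := Fin m) (univ : Finset Bool)
          (fun j bb => Real.exp (((∑ i, J i j * spin (x i)) + h2 j) * spin bb))
      rw [hswap, Finset.prod_congr rfl (fun j _ => hE _), ← Real.exp_sum, ← Real.exp_add]
    have hLsum : ∀ x : Fin n → Bool,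
        (∑ j : Fin m, Lch ((∑ i, J i j * spin (x i)) + h2 j))
        = (∑ S ∈ supp, KS S) + ∑ S ∈ supp, c S * ∏ i ∈ S, spin (x i) := by
      intro x
      have h0 : (∑ j : Fin m, Lch ((∑ i, J i j * spin (x i)) + h2 j))
          = ∑ u : I, Lch ((∑ i, W i u * spin (x i)) + bS u.1.1) := by
        simp only [hJdef, hh2def]
        exact Fintype.sum_equiv e _ _ (fun j => rfl)
      rw [h0]
      have h1' : (∑ u : I, Lch ((∑ i, W i u * spin (x i)) + bS u.1.1))
          = ∑ S' : {S // S ∈ suppF n c}, ∑ A' : {A // A ∈ famF n εS S'.1},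
              Lch ((∑ i, (if i ∈ A'.1 then -(tS S'.1) else if i ∈ S'.1 then tS S'.1 else 0)
                * spin (x i)) + bS S'.1) := by
        rw [← Finset.univ_sigma_univ, Finset.sum_sigma]
        rfl
      rw [h1']
      have h2' : ∀ S' : {S // S ∈ suppF n c},
          (∑ A' : {A // A ∈ famF n εS S'.1},
            Lch ((∑ i, (if i ∈ A'.1 then -(tS S'.1) else if i ∈ S'.1 then tS S'.1 else 0)
              * spin (x i)) + bS S'.1))
          = KS S'.1 + c S'.1 * ∏ i ∈ S'.1, spin (x i) := by
        intro S'
        have hSmem : c S'.1 ≠ 0 ∧ 2 ≤ S'.1.card := (hsuppmem S'.1).1 S'.2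
        rw [Finset.sum_coe_sort (famF n εS S'.1)
          (fun A => Lch ((∑ i, (if i ∈ A then -(tS S'.1) else if i ∈ S'.1 then tS S'.1 else 0)
            * spin (x i)) + bS S'.1))]
        have hres : ∀ A ∈ famF n εS S'.1,
            Lch ((∑ i, (if i ∈ A then -(tS S'.1) else if i ∈ S'.1 then tS S'.1 else 0)
              * spin (x i)) + bS S'.1)
            = Lch ((∑ i ∈ S'.1, (if i ∈ A then -(tS S'.1) else tS S'.1) * spin (x i))
                + bS S'.1) := by
          intro A hA
          have hAS : A ⊆ S'.1 := by
            simp only [famF, mem_filter, mem_powerset] at hA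
            exact hA.1
          congr 1
          refine congrArg (· + bS S'.1) ?_
          rw [← Finset.sum_subset (Finset.subset_univ S'.1) (fun i _ hiS => ?_)]
          · refine Finset.sum_congr rfl fun i hiS => ?_
            by_cases hiA : i ∈ A
            · rw [if_pos hiA, if_pos hiA]
            · rw [if_neg hiA, if_neg hiA, if_pos hiS]
          · rw [if_neg (fun hiA => hiS (hAS hiA)), if_neg hiS, zero_mul]
        rw [Finset.sum_congr rfl hres]
        exact (hgadS S'.1 hSmem).2 x
      rw [Finset.sum_congr rfl (fun S' _ => h2' S'), Finset.sum_add_distrib]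
      congr 1
      · exact Finset.sum_coe_sort (suppF n c) (fun S => KS S)
      · exact Finset.sum_coe_sort (suppF n c) (fun S => c S * ∏ i ∈ S, spin (x i))
    have hpot : ∀ x : Fin n → Bool, mrfPotential n c x
        = (∑ i, h1 i * spin (x i)) + ∑ S ∈ supp, c S * ∏ i ∈ S, spin (x i) := by
      intro x
      rw [mrfPotential]
      rw [← Finset.sum_filter_add_sum_filter_not (univ : Finset (Finset (Fin n)))
        (fun S => c S ≠ 0 ∧ 2 ≤ S.card) (fun S => c S * ∏ i ∈ S, spin (x i))]
      rw [show univ.filter (fun S : Finset (Fin n) => c S ≠ 0 ∧ 2 ≤ S.card) = supp from rfl]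
      rw [add_comm]
      congr 1
      have hsing : (univ.filter (fun S : Finset (Fin n) => S.card = 1))
          ⊆ univ.filter (fun S : Finset (Fin n) => ¬(c S ≠ 0 ∧ 2 ≤ S.card)) := by
        intro S hS
        rw [mem_filter] at hS ⊢
        refine ⟨mem_univ _, ?_⟩
        rintro ⟨-, h2c⟩
        omega
      rw [← Finset.sum_subset hsing (fun S hS hnot => ?_)]
      · rw [show univ.filter (fun S : Finset (Fin n) => S.card = 1)
            = univ.image (fun i : Fin n => ({i} : Finset (Fin n))) from ?_]
        · rw [Finset.sum_image (fun a _ b _ h => Finset.singleton_inj.1 h)]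
          refine Finset.sum_congr rfl fun i _ => ?_
          rw [Finset.prod_singleton]
        · ext S
          simp only [mem_filter, mem_univ, true_and, mem_image, Finset.card_eq_one]
          constructor
          · rintro ⟨a, rfl⟩; exact ⟨a, rfl⟩
          · rintro ⟨a, rfl⟩; exact ⟨a, rfl⟩
      · rw [mem_filter] at hS hnot
        by_cases hcS : c S = 0
        · rw [hcS, zero_mul]
        · have hc1 : S.card ≠ 1 := fun h => hnot ⟨mem_univ _, h⟩
          have hc2 : ¬ 2 ≤ S.card := fun h => hS.2 ⟨hcS, h⟩
          have : S.card = 0 := by omega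
          rw [Finset.card_eq_zero] at this
          subst this
          rw [hc0, zero_mul]
    intro x
    rw [hmargF x, hLsum x]
    have hZ : rbmZ n m J h1 h2 = Real.exp (∑ S ∈ supp, KS S) *
        ∑ x' : Fin n → Bool, Real.exp (mrfPotential n c x') := by
      rw [rbmZ, Finset.mul_sum]
      refine Finset.sum_congr rfl fun x' _ => ?_
      rw [hmargF x', hLsum x', ← Real.exp_add, hpot x']
      congr 1
      ring
    have hnum : Real.exp ((∑ i, h1 i * spin (x i))
          + ((∑ S ∈ supp, KS S) + ∑ S ∈ supp, c S * ∏ i ∈ S, spin (x i)))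
        = Real.exp (∑ S ∈ supp, KS S) * Real.exp (mrfPotential n c x) := by
      rw [← Real.exp_add, hpot x]
      congr 1
      ring
    rw [hnum, hZ, mul_div_mul_left _ _ (Real.exp_ne_zero _)]
  · -- sparsity of hidden units
    intro j
    have hsub : univ.filter (fun i : Fin n => J i j ≠ 0) ⊆ (e j).1.1 := by
      intro i hi
      rw [mem_filter, hJdef] at hi
      exact (hWne (e j) i).1 hi.2
    exact le_trans (Finset.card_le_card hsub) (hcr _ (hUsupp (e j)).1)
  · -- two-hop neighborhoods
    intro i
    ext j'
    rw [twoHopNbhd, mrfNbhd, mem_filter, mem_filter]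
    constructor
    · rintro ⟨hu, hne, kh, hJi, hJj⟩
      rw [hJdef] at hJi hJj
      exact ⟨hu, hne, (e kh).1.1, (hUsupp (e kh)).1,
        (hWne (e kh) i).1 hJi, (hWne (e kh) j').1 hJj⟩
    · rintro ⟨hu, hne, S0, hcS0, hiS0, hjS0⟩
      refine ⟨hu, hne, ?_⟩
      have hS0card : 2 ≤ S0.card := by
        have := Finset.one_lt_card.2 ⟨i, hiS0, j', hjS0, fun h => hne h.symm⟩
        omega
      have hS0supp : S0 ∈ supp := (hsuppmem S0).2 ⟨hcS0, hS0card⟩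
      have hfamne : ∃ A, A ∈ famF n εS S0 := by
        cases hε : εS S0
        · obtain ⟨i0, hi0⟩ : S0.Nonempty := Finset.card_pos.1 (by omega)
          refine ⟨{i0}, ?_⟩
          simp only [famF, mem_filter, mem_powerset, hε]
          refine ⟨Finset.singleton_subset_iff.2 hi0, ?_⟩
          simp [Finset.card_singleton]
        · refine ⟨∅, ?_⟩
          simp only [famF, mem_filter, mem_powerset, hε]
          simp
      obtain ⟨A, hA⟩ := hfamne
      set u : I := ⟨⟨S0, hS0supp⟩, ⟨A, hA⟩⟩ with hudef
      refine ⟨e.symm u, ?_, ?_⟩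
      · rw [hJdef]
        simp only [Equiv.apply_symm_apply]
        exact (hWne u i).2 hiS0
      · rw [hJdef]
        simp only [Equiv.apply_symm_apply]
        exact (hWne u j').2 hjS0

end
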